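/- Let T be a Y(2|1) T-family in A, let ℓ ≥ 1, and let v, u₁, …, u_ℓ ∈ ℂ be such that the list (v, u₁, …, u_ℓ) is admissible. Then T₂₃(v)·𝕋₁₃(ū) = (−1)^ℓ f(ū,v)·𝕋₁₃(ū)·T₂₃(v) + Σ_{k=1}^{ℓ} g(uₖ,v)·g(uₖ,ūₖ)·T₁₃(v)·𝕋₁₃(ūₖ)·T₂₃(uₖ), where ūₖ denotes ū with uₖ removed, f(ū,v) = ∏ⱼ f(uⱼ,v) and g(uₖ,ūₖ) = ∏_{j≠k} g(uₖ,uⱼ). -/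

import Mathlib

open scoped BigOperators
open MulOpposite

noncomputable section

namespace Bethe

variable {A : Type*} [Ring A] [Algebra ℂ A]

/-- `g(u,v) = c/(u-v)` -/
def gg (c u v : ℂ) : ℂ := c / (u - v)

/-- `f(u,v) = (u-v+c)/(u-v)` -/
def ff (c u v : ℂ) : ℂ := (u - v + c) / (u - v)

/-- `h(u,v) = (u-v+c)/c` -/
def hh (c u v : ℂ) : ℂ := (u - v + c) / c

/-- A list of parameters is admissible if its entries are pairwise distinct and
`x - y + c ≠ 0` for any two distinct entries `x`, `y`. -/
def Admissible (c : ℂ) (l : List ℂ) : Prop :=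
  l.Pairwise fun x y => x ≠ y ∧ x - y + c ≠ 0 ∧ y - x + c ≠ 0

/-- `∏_{x ∈ xs} ∏_{y ∈ ys} f(x,y)` -/
def prodFF (c : ℂ) (xs ys : List ℂ) : ℂ :=
  (xs.map fun x => (ys.map fun y => ff c x y).prod).prod

/-- `∏_{x ∈ xs} ∏_{y ∈ ys} g(x,y)` -/
def prodGG (c : ℂ) (xs ys : List ℂ) : ℂ :=
  (xs.map fun x => (ys.map fun y => gg c x y).prod).prod

/-- `∏_{x ∈ xs} ∏_{y ∈ ys} h(x,y)` -/
def prodHH (c : ℂ) (xs ys : List ℂ) : ℂ :=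
  (xs.map fun x => (ys.map fun y => hh c x y).prod).prod

/-- `H(w̄) = ∏_{j>k} h(wⱼ,wₖ)` -/
def Hnorm (c : ℂ) : List ℂ → ℂ
  | [] => 1
  | x :: xs => ((xs.map fun y => hh c y x).prod) * Hnorm c xs

/-- `H(w̄*) = ∏_{j<k} h(wⱼ,wₖ)` -/
def HnormRev (c : ℂ) : List ℂ → ℂ
  | [] => 1
  | x :: xs => ((xs.map fun y => hh c x y).prod) * HnormRev c xs

/-- product of `h` over ordered pairs of distinct positions of a list -/
def prodHHne (c : ℂ) (xs : List ℂ) : ℂ :=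
  ∏ j : Fin xs.length, ∏ k : Fin xs.length,
    if j ≠ k then hh c (xs.get j) (xs.get k) else 1

/-- ordered product `T(w₁)⋯T(wₙ)` -/
def Tprod (Tij : ℂ → A) (l : List ℂ) : A := (l.map Tij).prod

/-- normalized ordered product `H(w̄)⁻¹ T(w₁)⋯T(wₙ)` -/
def TT (c : ℂ) (Tij : ℂ → A) (l : List ℂ) : A := (Hnorm c l)⁻¹ • Tprod Tij l

/-- normalized ordered product `H(w̄*)⁻¹ T(w₁)⋯T(wₙ)` -/
def TTrev (c : ℂ) (Tij : ℂ → A) (l : List ℂ) : A := (HnormRev c l)⁻¹ • Tprod Tij l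

/-- The defining (RTT) commutation relations of a super-Yangian `T`-family with
`ℤ₂`-grading `p`. -/
def IsTFam (c : ℂ) {N : ℕ} (p : Fin N → ℕ) (T : Fin N → Fin N → ℂ → A) : Prop :=
  ∀ i j k l : Fin N, ∀ z w : ℂ, z ≠ w →
    T i j z * T k l w - ((-1 : ℂ) ^ ((p i + p j) * (p k + p l))) • (T k l w * T i j z)
      = ((-1 : ℂ) ^ (p l * (p i + p j) + p i * p j) * gg c z w) •
          (T i l z * T k j w - T i l w * T k j z)

/-- the distinguished grading of `gl(2|1)`: `[1]=[2]=0`, `[3]=1` -/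
def p21 : Fin 3 → ℕ := ![0, 0, 1]

/-- the distinguished grading of `gl(1|2)`: `[1]=0`, `[2]=[3]=1` -/
def p12 : Fin 3 → ℕ := ![0, 1, 1]

/-- the sublist of `l` given by the positions in `S`, in the inherited order -/
def sel (l : List ℂ) (S : Finset (Fin l.length)) : List ℂ :=
  (S.sort (· ≤ ·)).map l.get

/-- `λ(w̄) = ∏ⱼ λ(wⱼ)` -/
def lamP (lam2 : ℂ → ℂ) (l : List ℂ) : ℂ := (l.map lam2).prod

/-- The Izergin kernel `K_ℓ(v̄|ū)`. -/
def Kiz (c : ℂ) {ℓ : ℕ} (vs us : Fin ℓ → ℂ) : ℂ :=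
  (∏ j : Fin ℓ, ∏ k : Fin ℓ, if (k : ℕ) < (j : ℕ) then gg c (vs j) (vs k) else 1) *
    (∏ j : Fin ℓ, ∏ k : Fin ℓ, if (k : ℕ) < (j : ℕ) then gg c (us k) (us j) else 1) *
    (∏ j : Fin ℓ, ∏ k : Fin ℓ, hh c (vs j) (us k)) *
    Matrix.det (Matrix.of fun j k => gg c (vs j) (us k) / hh c (vs j) (us k))

/-- The Izergin kernel for lists of equal length (and junk value `0` otherwise). -/
def KizL (c : ℂ) (vs us : List ℂ) : ℂ :=
  if h : vs.length = us.length then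
    Kiz c vs.get fun j => us.get (Fin.cast h j)
  else 0

/-- The operator `X_{a,b}(ū,v̄)` of the paper (`Y(2|1)` case). -/
def X (c : ℂ) (T : Fin 3 → Fin 3 → ℂ → A) (u v : List ℂ) : A :=
  ∑ S : Finset (Fin u.length), ∑ Q : Finset (Fin v.length),
    if S.card = Q.card then
      (prodGG c (sel v Q) (sel u S) * prodFF c (sel u S) (sel u Sᶜ) *
          prodGG c (sel v Qᶜ) (sel v Q) * prodHHne c (sel u S)) •
        (TT c (T 0 2) (sel u S) * Tprod (T 0 1) (sel u Sᶜ) *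
          TT c (T 1 2) (sel v Qᶜ) * Tprod (T 1 1) (sel v Q))
    else 0

/-- The operator `Y_{a,b}(ū,v̄)` of the paper (`Y(2|1)` case). -/
def Y (c : ℂ) (T : Fin 3 → Fin 3 → ℂ → A) (u v : List ℂ) : A :=
  ∑ S : Finset (Fin u.length), ∑ Q : Finset (Fin v.length),
    if S.card = Q.card then
      (KizL c (sel v Q) (sel u S) * prodFF c (sel u S) (sel u Sᶜ) *
          prodGG c (sel v Qᶜ) (sel v Q)) •
        (TT c (T 0 2) (sel v Q) * TT c (T 1 2) (sel v Qᶜ) *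
          Tprod (T 0 1) (sel u Sᶜ) * Tprod (T 1 1) (sel u S))
    else 0

/-- First explicit expression for the `Y(2|1)` Bethe vector (operator part,
the weights `λ₂` included as scalars). -/
def PhiA (c : ℂ) (T : Fin 3 → Fin 3 → ℂ → A) (lam2 : ℂ → ℂ) (u v : List ℂ) : A :=
  ∑ S : Finset (Fin u.length), ∑ Q : Finset (Fin v.length),
    if S.card = Q.card then
      (prodGG c (sel v Q) (sel u S) * prodFF c (sel u S) (sel u Sᶜ) *
          prodGG c (sel v Qᶜ) (sel v Q) * prodHHne c (sel u S) * lamP lam2 (sel v Q)) •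
        (TT c (T 0 2) (sel u S) * Tprod (T 0 1) (sel u Sᶜ) * TT c (T 1 2) (sel v Qᶜ))
    else 0

/-- Second explicit expression for the `Y(2|1)` Bethe vector (operator part). -/
def PhiB (c : ℂ) (T : Fin 3 → Fin 3 → ℂ → A) (lam2 : ℂ → ℂ) (u v : List ℂ) : A :=
  ∑ S : Finset (Fin u.length), ∑ Q : Finset (Fin v.length),
    if S.card = Q.card then
      (KizL c (sel v Q) (sel u S) * prodFF c (sel u S) (sel u Sᶜ) *
          prodGG c (sel v Qᶜ) (sel v Q) * lamP lam2 (sel u S)) •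
        (TT c (T 0 2) (sel v Q) * TT c (T 1 2) (sel v Qᶜ) * Tprod (T 0 1) (sel u Sᶜ))
    else 0

/-- First explicit expression for the `Y(1|2)` Bethe vector, without the overall
sign `(-1)^b` (operator part). -/
def PhiTA (c : ℂ) (T : Fin 3 → Fin 3 → ℂ → A) (lam2 : ℂ → ℂ) (u v : List ℂ) : A :=
  ∑ S : Finset (Fin u.length), ∑ Q : Finset (Fin v.length),
    if S.card = Q.card then
      (prodGG c (sel u S) (sel v Q) * prodFF c (sel v Q) (sel v Qᶜ) *
          prodGG c (sel u Sᶜ) (sel u S) * prodHHne c (sel v Q) * lamP lam2 (sel u S)) •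
        (TT c (T 0 2) (sel v Q) * Tprod (T 1 2) (sel v Qᶜ) * TT c (T 0 1) (sel u Sᶜ))
    else 0

/-- Second explicit expression for the `Y(1|2)` Bethe vector, without the overall
sign `(-1)^b` (operator part). -/
def PhiTB (c : ℂ) (T : Fin 3 → Fin 3 → ℂ → A) (lam2 : ℂ → ℂ) (u v : List ℂ) : A :=
  ∑ S : Finset (Fin u.length), ∑ Q : Finset (Fin v.length),
    if S.card = Q.card then
      (KizL c (sel u S) (sel v Q) * prodFF c (sel v Q) (sel v Qᶜ) *
          prodGG c (sel u Sᶜ) (sel u S) * lamP lam2 (sel v Q)) •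
        (TT c (T 0 2) (sel u S) * TT c (T 0 1) (sel u Sᶜ) * Tprod (T 1 2) (sel v Qᶜ))
    else 0

/-- First explicit expression for the dual `Y(2|1)` Bethe vector, without the
overall sign `(-1)^{b(b-1)/2}`.  `E` is a right `A`-module, i.e. a left
`Aᵐᵒᵖ`-module; `op X • Ωd` is `Ωd · X`. -/
def PsiA {E : Type*} [AddCommGroup E] [Module ℂ E] [Module Aᵐᵒᵖ E]
    (c : ℂ) (T : Fin 3 → Fin 3 → ℂ → A) (lam2 : ℂ → ℂ) (u v : List ℂ) (Ωd : E) : E :=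
  ∑ S : Finset (Fin u.length), ∑ Q : Finset (Fin v.length),
    if S.card = Q.card then
      (prodGG c (sel v Q) (sel u S) * prodFF c (sel u S) (sel u Sᶜ) *
          prodGG c (sel v Qᶜ) (sel v Q) * prodHHne c (sel u S) * lamP lam2 (sel v Q)) •
        (op (TTrev c (T 2 1) (sel v Qᶜ) * Tprod (T 1 0) (sel u Sᶜ) *
              TTrev c (T 2 0) (sel u S)) • Ωd)
    else 0

/-- The dual `Y(2|1)` Bethe vector `Ψ_{a,b}(ū,v̄)`. -/
def Psi {E : Type*} [AddCommGroup E] [Module ℂ E] [Module Aᵐᵒᵖ E]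
    (c : ℂ) (T : Fin 3 → Fin 3 → ℂ → A) (lam2 : ℂ → ℂ) (u v : List ℂ) (Ωd : E) : E :=
  ((-1 : ℂ) ^ (v.length * (v.length - 1) / 2)) • PsiA c T lam2 u v Ωd

/-- Second explicit expression for the dual `Y(2|1)` Bethe vector, without the
overall sign `(-1)^{b(b-1)/2}`. -/
def PsiB {E : Type*} [AddCommGroup E] [Module ℂ E] [Module Aᵐᵒᵖ E]
    (c : ℂ) (T : Fin 3 → Fin 3 → ℂ → A) (lam2 : ℂ → ℂ) (u v : List ℂ) (Ωd : E) : E :=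
  ∑ S : Finset (Fin u.length), ∑ Q : Finset (Fin v.length),
    if S.card = Q.card then
      (KizL c (sel v Q) (sel u S) * prodFF c (sel u S) (sel u Sᶜ) *
          prodGG c (sel v Qᶜ) (sel v Q) * lamP lam2 (sel u S)) •
        (op (Tprod (T 1 0) (sel u Sᶜ) * TTrev c (T 2 1) (sel v Qᶜ) *
              TTrev c (T 2 0) (sel v Q)) • Ωd)
    else 0

lemma TT_cons (c : ℂ) (Tij : ℂ → A) (x : ℂ) (l : List ℂ) :
    TT c Tij (x :: l)
      = ((l.map fun y => hh c y x).prod)⁻¹ • (Tij x * TT c Tij l) := by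
  simp only [TT, Hnorm, Tprod, List.map_cons, List.prod_cons, mul_inv, mul_smul,
    mul_smul_comm]

lemma prod_map_eraseIdx (φ : ℂ → ℂ) :
    ∀ (l : List ℂ) (k : Fin l.length),
      (l.map φ).prod = φ (l.get k) * ((l.eraseIdx (k : ℕ)).map φ).prod := by
  intro l
  induction l with
  | nil => exact fun k => k.elim0
  | cons a l ih =>
    intro k
    cases k using Fin.cases with
    | zero => simp
    | succ k =>
      simp only [List.map_cons, List.prod_cons, List.get_eq_getElem, Fin.val_succ,
        List.getElem_cons_succ, List.eraseIdx_cons_succ]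
      rw [show (l[(k:ℕ)] : ℂ) = l.get k from rfl, ih k]
      ring

lemma one_add_gg {c z v : ℂ} (h : z ≠ v) : 1 + gg c z v = ff c z v := by
  have h1 : z - v ≠ 0 := sub_ne_zero.mpr h
  unfold gg ff
  field_simp [gg, ff]

lemma one_sub_gg {c z v : ℂ} (h : z ≠ v) : 1 - gg c z v = ff c v z := by
  have h1 : z - v ≠ 0 := sub_ne_zero.mpr h
  have h2 : v - z ≠ 0 := sub_ne_zero.mpr h.symm
  unfold gg ff
  field_simp [gg, ff]
  ring

lemma neg_ff {c a x : ℂ} (hc : c ≠ 0) (h : a ≠ x) : -(ff c a x) = hh c a x * gg c x a := by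
  have h1 : a - x ≠ 0 := sub_ne_zero.mpr h
  have h2 : x - a ≠ 0 := sub_ne_zero.mpr h.symm
  unfold ff hh gg
  field_simp [ff, hh, gg]
  ring

lemma neg_ff_prod {c : ℂ} (hc : c ≠ 0) (x : ℂ) :
    ∀ (l : List ℂ), (∀ y ∈ l, y ≠ x) →
      (-1 : ℂ) ^ l.length * (l.map fun y => ff c y x).prod
        = (l.map fun y => hh c y x).prod * (l.map fun y => gg c x y).prod := by
  intro l
  induction l with
  | nil => simp
  | cons a l ih =>
    intro h
    simp only [List.map_cons, List.prod_cons, List.length_cons, pow_succ]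
    rw [show (-1:ℂ)^l.length * -1 * (ff c a x * (l.map fun y => ff c y x).prod)
        = (-(ff c a x)) * ((-1:ℂ)^l.length * (l.map fun y => ff c y x).prod) by ring,
      neg_ff hc (h a List.mem_cons_self), ih fun y hy => h y (List.mem_cons_of_mem a hy)]
    ring

lemma prod_hh_ne_zero {c : ℂ} (hc : c ≠ 0) {x : ℂ} {l : List ℂ}
    (h : ∀ y ∈ l, y - x + c ≠ 0) : (l.map fun y => hh c y x).prod ≠ 0 := by
  refine List.prod_ne_zero fun h0 => ?_
  rcases List.mem_map.mp h0 with ⟨y, hy, hy0⟩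
  exact div_ne_zero (h y hy) hc hy0

lemma R1 {c : ℂ} (T : Fin 3 → Fin 3 → ℂ → A) (hT : IsTFam c p21 T) {z v : ℂ} (h : z ≠ v) :
    T 1 2 v * T 0 2 z
      = (-(ff c z v)) • (T 0 2 z * T 1 2 v) + gg c z v • (T 0 2 v * T 1 2 z) := by
  have h0 := hT 0 2 1 2 z v h
  simp only [show p21 0 = 0 from rfl, show p21 1 = 0 from rfl, show p21 2 = 1 from rfl] at h0
  norm_num at h0
  rw [← one_add_gg h]
  linear_combination (norm := module) h0

lemma R2 {c : ℂ} (T : Fin 3 → Fin 3 → ℂ → A) (hT : IsTFam c p21 T) {x v : ℂ} (h : x ≠ v) :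
    (ff c x v) • (T 0 2 x * T 0 2 v) = (-(ff c v x)) • (T 0 2 v * T 0 2 x) := by
  have h0 := hT 0 2 0 2 x v h
  simp only [show p21 0 = 0 from rfl, show p21 2 = 1 from rfl] at h0
  norm_num at h0
  rw [← one_add_gg h, ← one_sub_gg h]
  linear_combination (norm := module) h0

lemma R2Z {c : ℂ} (T : Fin 3 → Fin 3 → ℂ → A) (hT : IsTFam c p21 T) {x v : ℂ} (h : x ≠ v)
    (Z : A) :
    (-(ff c x v)) • (T 0 2 x * (T 0 2 v * Z)) = (ff c v x) • (T 0 2 v * (T 0 2 x * Z)) := by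
  have h0 := congrArg (· * Z) (R2 T hT h)
  simp only [smul_mul_assoc, mul_assoc] at h0
  linear_combination (norm := module) -h0



/-- multiple commutation relation of `T₂₃` with `𝕋₁₃(ū)` in `Y(2|1)`. -/
theorem statement1 (c : ℂ) (hc : c ≠ 0) (T : Fin 3 → Fin 3 → ℂ → A)
    (hT : IsTFam c p21 T) (v : ℂ) (u : List ℂ) (hlen : 1 ≤ u.length)
    (hadm : Admissible c (v :: u)) :
    T 1 2 v * TT c (T 0 2) u
      = ((-1 : ℂ) ^ u.length * (u.map fun x => ff c x v).prod) •
          (TT c (T 0 2) u * T 1 2 v)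
        + ∑ k : Fin u.length,
            (gg c (u.get k) v *
                ((u.eraseIdx (k : ℕ)).map fun x => gg c (u.get k) x).prod) •
              (T 0 2 v * TT c (T 0 2) (u.eraseIdx (k : ℕ)) * T 1 2 (u.get k)) := by
  clear hlen
  induction u generalizing v with
  | nil => simp [TT, Hnorm, Tprod]
  | cons x w ih =>
    have hpc := List.pairwise_cons.mp hadm
    have hv : ∀ y ∈ x :: w, v ≠ y ∧ v - y + c ≠ 0 ∧ y - v + c ≠ 0 := hpc.1
    have hadm_xw : Admissible c (x :: w) := hpc.2
    have hpc2 := List.pairwise_cons.mp hadm_xw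
    have hx : ∀ y ∈ w, x ≠ y ∧ x - y + c ≠ 0 ∧ y - x + c ≠ 0 := hpc2.1
    have hadm_w : Admissible c w := hpc2.2
    have hadm_vw : Admissible c (v :: w) :=
      List.Pairwise.cons (fun y hy => hv y (List.mem_cons_of_mem x hy)) hadm_w
    have hvx : v ≠ x := (hv x List.mem_cons_self).1
    have hxv : x ≠ v := hvx.symm
    have hH : (w.map fun y => hh c y x).prod ≠ 0 :=
      prod_hh_ne_zero hc (fun y hy => (hx y hy).2.2)
    have hL : T 1 2 v * TT c (T 0 2) (x :: w)
        = (((w.map fun y => hh c y x).prod)⁻¹ *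
              ((-1 : ℂ) ^ (w.length + 1) * (ff c x v * (w.map fun y => ff c y v).prod))) •
            (T 0 2 x * (TT c (T 0 2) w * T 1 2 v))
          + (gg c x v * (w.map fun y => gg c x y).prod) •
            (T 0 2 v * (TT c (T 0 2) w * T 1 2 x))
          + ∑ k : Fin w.length,
              ((gg c (w.get k) v * gg c (w.get k) x *
                  ((w.eraseIdx (k : ℕ)).map fun y => gg c (w.get k) y).prod) *
                (((w.eraseIdx (k : ℕ)).map fun y => hh c y x).prod)⁻¹) •
              (T 0 2 v *
                (T 0 2 x * (TT c (T 0 2) (w.eraseIdx (k : ℕ)) * T 1 2 (w.get k)))) := by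
      rw [TT_cons, mul_smul_comm, ← mul_assoc, R1 T hT hxv, add_mul, smul_mul_assoc,
        smul_mul_assoc, mul_assoc, mul_assoc, ih v hadm_vw, ih x hadm_xw]
      have hM1 : ((w.map fun y => hh c y x).prod)⁻¹ •
            ((-(ff c x v)) • (T 0 2 x *
              (((-1 : ℂ) ^ w.length * (w.map fun y => ff c y v).prod) •
                (TT c (T 0 2) w * T 1 2 v))))
          = (((w.map fun y => hh c y x).prod)⁻¹ *
              ((-1 : ℂ) ^ (w.length + 1) * (ff c x v * (w.map fun y => ff c y v).prod))) •
            (T 0 2 x * (TT c (T 0 2) w * T 1 2 v)) := by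
        simp only [mul_smul_comm, smul_smul]
        match_scalars
        ring
      have hM2 : ((w.map fun y => hh c y x).prod)⁻¹ •
            (gg c x v • (T 0 2 v *
              (((-1 : ℂ) ^ w.length * (w.map fun y => ff c y x).prod) •
                (TT c (T 0 2) w * T 1 2 x))))
          = (gg c x v * (w.map fun y => gg c x y).prod) •
            (T 0 2 v * (TT c (T 0 2) w * T 1 2 x)) := by
        simp only [mul_smul_comm, smul_smul]
        rw [neg_ff_prod hc x w (fun y hy => (hx y hy).1.symm)]
        congr 1
        field_simp
      have hS : ((w.map fun y => hh c y x).prod)⁻¹ •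
            ((-(ff c x v)) • (T 0 2 x *
              (∑ k : Fin w.length,
                (gg c (w.get k) v *
                    ((w.eraseIdx (k : ℕ)).map fun y => gg c (w.get k) y).prod) •
                  (T 0 2 v * TT c (T 0 2) (w.eraseIdx (k : ℕ)) * T 1 2 (w.get k)))))
          + ((w.map fun y => hh c y x).prod)⁻¹ •
            (gg c x v • (T 0 2 v *
              (∑ k : Fin w.length,
                (gg c (w.get k) x *
                    ((w.eraseIdx (k : ℕ)).map fun y => gg c (w.get k) y).prod) •
                  (T 0 2 x * TT c (T 0 2) (w.eraseIdx (k : ℕ)) * T 1 2 (w.get k)))))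
          = ∑ k : Fin w.length,
              ((gg c (w.get k) v * gg c (w.get k) x *
                  ((w.eraseIdx (k : ℕ)).map fun y => gg c (w.get k) y).prod) *
                (((w.eraseIdx (k : ℕ)).map fun y => hh c y x).prod)⁻¹) •
              (T 0 2 v *
                (T 0 2 x * (TT c (T 0 2) (w.eraseIdx (k : ℕ)) * T 1 2 (w.get k)))) := by
        simp only [Finset.mul_sum, Finset.smul_sum]
        rw [← Finset.sum_add_distrib]
        refine Finset.sum_congr rfl fun k _ => ?_
        have hdmem : w.get k ∈ w := by
          have := List.get_mem w k
          simpa using this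
        have hdx : w.get k ≠ x := (hx _ hdmem).1.symm
        have hdv : w.get k ≠ v := (hv _ (List.mem_cons_of_mem x hdmem)).1.symm
        have hhdx : hh c (w.get k) x ≠ 0 := div_ne_zero (hx _ hdmem).2.2 hc
        have hQ : ((w.eraseIdx (k : ℕ)).map fun y => hh c y x).prod ≠ 0 :=
          prod_hh_ne_zero hc (fun y hy => (hx y (List.mem_of_mem_eraseIdx hy)).2.2)
        simp only [mul_assoc, mul_smul_comm, smul_smul]
        rw [show ((w.map fun y => hh c y x).prod)⁻¹ * (-(ff c x v) *
              (gg c (w.get k) v * ((w.eraseIdx (k : ℕ)).map fun y => gg c (w.get k) y).prod))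
            = (((w.map fun y => hh c y x).prod)⁻¹ *
                (gg c (w.get k) v *
                  ((w.eraseIdx (k : ℕ)).map fun y => gg c (w.get k) y).prod)) * (-(ff c x v))
            from by ring, mul_smul,
          R2Z T hT hxv (TT c (T 0 2) (w.eraseIdx (k : ℕ)) * T 1 2 (w.get k)), smul_smul,
          ← add_smul]
        congr 1
        rw [prod_map_eraseIdx (fun y => hh c y x) w k]
        have e1 : (w[(k : ℕ)] : ℂ) - x ≠ 0 := sub_ne_zero.mpr hdx
        have e2 : (w[(k : ℕ)] : ℂ) - v ≠ 0 := sub_ne_zero.mpr hdv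
        have e3 : v - x ≠ 0 := sub_ne_zero.mpr hvx
        have e4 : x - v ≠ 0 := sub_ne_zero.mpr hxv
        have e5 : (w[(k : ℕ)] : ℂ) - x + c ≠ 0 := (hx _ hdmem).2.2
        have hQ' : (List.map (fun y => (y - x + c) / c) (w.eraseIdx (k : ℕ))).prod ≠ 0 := by
          simpa [hh] using hQ
        simp only [mul_inv]
        field_simp [hhdx, hQ]
        simp only [gg, ff, hh]
        field_simp
        ring
      rw [mul_add, mul_add]
      simp only [smul_add]
      linear_combination (norm := module) hM1 + hM2 + hS
    have hR : ((-1 : ℂ) ^ (x :: w).length * ((x :: w).map fun y => ff c y v).prod) •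
            (TT c (T 0 2) (x :: w) * T 1 2 v)
          + ∑ k : Fin (x :: w).length,
              (gg c ((x :: w).get k) v *
                  (((x :: w).eraseIdx (k : ℕ)).map fun y => gg c ((x :: w).get k) y).prod) •
                (T 0 2 v * TT c (T 0 2) ((x :: w).eraseIdx (k : ℕ)) * T 1 2 ((x :: w).get k))
        = (((w.map fun y => hh c y x).prod)⁻¹ *
              ((-1 : ℂ) ^ (w.length + 1) * (ff c x v * (w.map fun y => ff c y v).prod))) •
            (T 0 2 x * (TT c (T 0 2) w * T 1 2 v))
          + (gg c x v * (w.map fun y => gg c x y).prod) •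
            (T 0 2 v * (TT c (T 0 2) w * T 1 2 x))
          + ∑ k : Fin w.length,
              ((gg c (w.get k) v * gg c (w.get k) x *
                  ((w.eraseIdx (k : ℕ)).map fun y => gg c (w.get k) y).prod) *
                (((w.eraseIdx (k : ℕ)).map fun y => hh c y x).prod)⁻¹) •
              (T 0 2 v *
                (T 0 2 x * (TT c (T 0 2) (w.eraseIdx (k : ℕ)) * T 1 2 (w.get k)))) := by
      simp only [List.length_cons]
      rw [Fin.sum_univ_succ]
      simp only [List.map_cons, List.prod_cons, TT_cons, List.get_eq_getElem, Fin.val_zero,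
        Fin.val_succ, List.getElem_cons_zero, List.getElem_cons_succ, List.eraseIdx_cons_succ,
        List.eraseIdx_zero, List.tail_cons, smul_mul_assoc, mul_smul_comm, smul_smul, mul_assoc]
      rw [← add_assoc]
      congr 1
      all_goals try (refine Finset.sum_congr rfl fun k _ => ?_)
      all_goals match_scalars <;> ring
    exact hL.trans hR.symm


end Bethe
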